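/- Let T > 0, let a, b ∈ L¹([t₀, t₀+T]; ℝ) with b(t) ≥ 0 for almost every t ∈ [t₀, t₀+T], and let 0 ≤ α < 1. If an absolutely continuous function w : [t₀, t₀+T] → [0,∞) satisfies (1−α) w′(t) ≤ a(t) w(t) + b(t) w(t)^α for almost every t ∈ [t₀, t₀+T], then for all t ∈ [t₀, t₀+T] one has w(t)^{1−α} ≤ w(t₀)^{1−α} exp(∫_{t₀}^t a(τ) dτ) + ∫_{t₀}^t exp(∫_s^t a(τ) dτ) b(s) ds. -/

import Mathlib

open Set MeasureTheory

/-- Mean value theorem for `rpow` on a positive interval. -/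
private lemma gronwall_rpow_mvt {p X Y : ℝ} (hX : 0 < X) (hXY : X < Y) :
    ∃ ξ ∈ Set.Ioo X Y, Y ^ p - X ^ p = p * ξ ^ (p - 1) * (Y - X) := by
  obtain ⟨ξ, hξ, hs⟩ := exists_hasDerivAt_eq_slope (fun x => x ^ p)
    (fun x => p * x ^ (p - 1)) hXY
    (fun x hx => (Real.hasDerivAt_rpow_const
      (Or.inl (ne_of_gt (lt_of_lt_of_le hX hx.1)))).continuousAt.continuousWithinAt)
    (fun x hx => Real.hasDerivAt_rpow_const (Or.inl (ne_of_gt (hX.trans hx.1))))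
  refine ⟨ξ, hξ, ?_⟩
  have hne : Y - X ≠ 0 := sub_ne_zero.mpr (ne_of_gt hXY)
  rw [eq_div_iff hne] at hs
  exact hs.symm

/-- Tangent line inequality for the concave function `x ↦ x ^ β`, `0 < β ≤ 1`. -/
private lemma gronwall_rpow_tangent {β X Y : ℝ} (hβ0 : 0 < β) (hβ1 : β ≤ 1)
    (hX : 0 < X) (hY : 0 < Y) :
    Y ^ β - X ^ β ≤ β * X ^ (β - 1) * (Y - X) := by
  rcases lt_trichotomy X Y with h | h | h
  · obtain ⟨ξ, hξ, he⟩ := gronwall_rpow_mvt hX h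
    rw [he]
    have h1 : ξ ^ (β - 1) ≤ X ^ (β - 1) :=
      Real.rpow_le_rpow_of_nonpos hX hξ.1.le (by linarith)
    have h2 : (0:ℝ) ≤ Y - X := by linarith
    exact mul_le_mul_of_nonneg_right (mul_le_mul_of_nonneg_left h1 hβ0.le) h2
  · rw [h]; simp
  · obtain ⟨ξ, hξ, he⟩ := gronwall_rpow_mvt hY h
    have h2 : Y ^ β - X ^ β = β * ξ ^ (β - 1) * (Y - X) := by linear_combination -he
    rw [h2]
    have hξ0 : 0 < ξ := hY.trans hξ.1
    have h1 : X ^ (β - 1) ≤ ξ ^ (β - 1) :=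
      Real.rpow_le_rpow_of_nonpos hξ0 hξ.2.le (by linarith)
    have h3 : Y - X ≤ 0 := by linarith
    exact mul_le_mul_of_nonpos_right (mul_le_mul_of_nonneg_left h1 hβ0.le) h3

/-- Lipschitz-type bound for `x ↦ x ^ (-α)` on `[ε, ∞)`. -/
private lemma gronwall_rpow_neg_lip {α ε X Y : ℝ} (hα : 0 ≤ α) (hε : 0 < ε)
    (hX : ε ≤ X) (hY : ε ≤ Y) :
    |X ^ (-α) - Y ^ (-α)| ≤ α * ε ^ (-α - 1) * |X - Y| := by
  wlog hXY : X ≤ Y generalizing X Y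
  · rw [abs_sub_comm, abs_sub_comm X Y]
    exact this hY hX (le_of_not_ge hXY)
  rcases eq_or_lt_of_le hXY with h | h
  · rw [h]
    simp
  · have hX0 : 0 < X := hε.trans_le hX
    obtain ⟨ξ, hξ, he⟩ := gronwall_rpow_mvt (p := -α) hX0 h
    have hξ0 : 0 < ξ := hX0.trans hξ.1
    have key : X ^ (-α) - Y ^ (-α) = α * ξ ^ (-α - 1) * (Y - X) := by
      linear_combination -he
    have h1 : 0 ≤ α * ξ ^ (-α - 1) * (Y - X) :=
      mul_nonneg (mul_nonneg hα (Real.rpow_nonneg hξ0.le _)) (by linarith)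
    rw [key, abs_of_nonneg h1, abs_of_nonpos (by linarith : X - Y ≤ 0)]
    have h2 : ξ ^ (-α - 1) ≤ ε ^ (-α - 1) :=
      Real.rpow_le_rpow_of_nonpos hε (hX.trans hξ.1.le) (by linarith)
    have h3 : -(X - Y) = Y - X := by ring
    rw [h3]
    exact mul_le_mul_of_nonneg_right (mul_le_mul_of_nonneg_left h2 hα) (by linarith)

/-- Pointwise bound used in the Gronwall argument. -/
private lemma gronwall_pointwise {α ε η L M ar br wr w'r wP : ℝ}
    (hα0 : 0 ≤ α) (hα1 : α < 1) (hε : 0 < ε)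
    (hL : L = α * ε ^ (-α - 1))
    (hwr : 0 ≤ wr) (hwrM : wr ≤ M) (hwP : 0 ≤ wP)
    (hbr : 0 ≤ br)
    (hineq : (1 - α) * w'r ≤ ar * wr + br * wr ^ α)
    (hmod : |wP - wr| ≤ η) (hη : 0 ≤ η) :
    (1 - α) * (wP + ε) ^ (-α) * w'r ≤
      ar * (wr + ε) ^ (1 - α) + (ε ^ (1 - α) * |ar| + br)
        + ((L * η * M) * |ar| + (L * η * (M ^ α)) * br) := by
  have hX : 0 < wr + ε := by linarith
  have hXP : 0 < wP + ε := by linarith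
  have hεX : ε ≤ wr + ε := by linarith
  have hεXP : ε ≤ wP + ε := by linarith
  have hXPα : 0 ≤ (wP + ε) ^ (-α) := Real.rpow_nonneg hXP.le _
  have hXα : 0 ≤ (wr + ε) ^ (-α) := Real.rpow_nonneg hX.le _
  -- step 1
  have h1 : (wP + ε) ^ (-α) * ((1 - α) * w'r) ≤ (wP + ε) ^ (-α) * (ar * wr + br * wr ^ α) :=
    mul_le_mul_of_nonneg_left hineq hXPα
  -- B1
  have hXpow : (wr + ε) ^ (1 - α) = (wr + ε) * (wr + ε) ^ (-α) := by
    rw [show (1:ℝ) - α = 1 + (-α) by ring, Real.rpow_add hX, Real.rpow_one]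
  have hxmul : wr * (wr + ε) ^ (-α) = (wr + ε) ^ (1 - α) - ε * (wr + ε) ^ (-α) := by
    linear_combination -hXpow
  have hεpow : ε * ε ^ (-α) = ε ^ (1 - α) := by
    rw [show (1:ℝ) - α = 1 + (-α) by ring, Real.rpow_add hε, Real.rpow_one]
  have hεX' : ε * (wr + ε) ^ (-α) ≤ ε ^ (1 - α) := by
    have h := Real.rpow_le_rpow_of_nonpos hε hεX (neg_nonpos.mpr hα0)
    calc ε * (wr + ε) ^ (-α) ≤ ε * ε ^ (-α) := mul_le_mul_of_nonneg_left h hε.le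
      _ = ε ^ (1 - α) := hεpow
  have hεXnn : 0 ≤ ε * (wr + ε) ^ (-α) := mul_nonneg hε.le hXα
  have B1 : (wr + ε) ^ (-α) * (ar * wr) ≤ ar * (wr + ε) ^ (1 - α) + ε ^ (1 - α) * |ar| := by
    have e1 : (wr + ε) ^ (-α) * (ar * wr) =
        ar * (wr + ε) ^ (1 - α) - ar * (ε * (wr + ε) ^ (-α)) := by
      linear_combination ar * hxmul
    have e2 : -(ar * (ε * (wr + ε) ^ (-α))) ≤ |ar| * (ε * (wr + ε) ^ (-α)) := by
      rw [← neg_mul]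
      exact mul_le_mul_of_nonneg_right (neg_le_abs ar) hεXnn
    have e3 : |ar| * (ε * (wr + ε) ^ (-α)) ≤ |ar| * ε ^ (1 - α) :=
      mul_le_mul_of_nonneg_left hεX' (abs_nonneg ar)
    nlinarith [e1, e2, e3]
  -- B2
  have B2 : (wr + ε) ^ (-α) * (br * wr ^ α) ≤ br := by
    have h1' : wr ^ α ≤ (wr + ε) ^ α := Real.rpow_le_rpow hwr (by linarith) hα0
    have h2' : (wr + ε) ^ α * (wr + ε) ^ (-α) = 1 := by
      rw [← Real.rpow_add hX]; simp
    have h3' : wr ^ α * (wr + ε) ^ (-α) ≤ 1 := by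
      nlinarith [mul_le_mul_of_nonneg_right h1' hXα]
    calc (wr + ε) ^ (-α) * (br * wr ^ α) = br * (wr ^ α * (wr + ε) ^ (-α)) := by ring
      _ ≤ br * 1 := mul_le_mul_of_nonneg_left h3' hbr
      _ = br := mul_one br
  -- B3
  have hd : |(wP + ε) ^ (-α) - (wr + ε) ^ (-α)| ≤ L * η := by
    have h := gronwall_rpow_neg_lip hα0 hε hεXP hεX
    have h2 : (wP + ε) - (wr + ε) = wP - wr := by ring
    rw [h2] at h
    calc |(wP + ε) ^ (-α) - (wr + ε) ^ (-α)| ≤ α * ε ^ (-α - 1) * |wP - wr| := h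
      _ ≤ α * ε ^ (-α - 1) * η :=
          mul_le_mul_of_nonneg_left hmod (mul_nonneg hα0 (Real.rpow_nonneg hε.le _))
      _ = L * η := by rw [hL]
  have hSabs : |ar * wr + br * wr ^ α| ≤ M * |ar| + M ^ α * br := by
    have hwrα : (0:ℝ) ≤ wr ^ α := Real.rpow_nonneg hwr _
    have h1' : |ar * wr| ≤ |ar| * M := by
      rw [abs_mul, abs_of_nonneg hwr]
      exact mul_le_mul_of_nonneg_left hwrM (abs_nonneg ar)
    have h2' : |br * wr ^ α| = br * wr ^ α := abs_of_nonneg (mul_nonneg hbr hwrα)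
    have h3' : wr ^ α ≤ M ^ α := Real.rpow_le_rpow hwr hwrM hα0
    have h4' : br * wr ^ α ≤ br * M ^ α := mul_le_mul_of_nonneg_left h3' hbr
    calc |ar * wr + br * wr ^ α| ≤ |ar * wr| + |br * wr ^ α| := abs_add_le _ _
      _ ≤ |ar| * M + br * M ^ α := by rw [h2']; linarith
      _ = M * |ar| + M ^ α * br := by ring
  have hLη : 0 ≤ L * η := mul_nonneg (by rw [hL]; exact mul_nonneg hα0 (Real.rpow_nonneg hε.le _)) hη
  have B3 : ((wP + ε) ^ (-α) - (wr + ε) ^ (-α)) * (ar * wr + br * wr ^ α) ≤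
      (L * η * M) * |ar| + (L * η * (M ^ α)) * br := by
    calc ((wP + ε) ^ (-α) - (wr + ε) ^ (-α)) * (ar * wr + br * wr ^ α)
        ≤ |((wP + ε) ^ (-α) - (wr + ε) ^ (-α)) * (ar * wr + br * wr ^ α)| := le_abs_self _
      _ = |(wP + ε) ^ (-α) - (wr + ε) ^ (-α)| * |ar * wr + br * wr ^ α| := abs_mul _ _
      _ ≤ (L * η) * (M * |ar| + M ^ α * br) :=
          mul_le_mul hd hSabs (abs_nonneg _) hLη
      _ = (L * η * M) * |ar| + (L * η * (M ^ α)) * br := by ring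
  -- combine
  have hsplit : (wP + ε) ^ (-α) * (ar * wr + br * wr ^ α) =
      (wr + ε) ^ (-α) * (ar * wr) + (wr + ε) ^ (-α) * (br * wr ^ α)
        + ((wP + ε) ^ (-α) - (wr + ε) ^ (-α)) * (ar * wr + br * wr ^ α) := by ring
  have hfinal : (1 - α) * (wP + ε) ^ (-α) * w'r = (wP + ε) ^ (-α) * ((1 - α) * w'r) := by ring
  rw [hfinal]
  calc (wP + ε) ^ (-α) * ((1 - α) * w'r)
      ≤ (wP + ε) ^ (-α) * (ar * wr + br * wr ^ α) := h1
    _ = (wr + ε) ^ (-α) * (ar * wr) + (wr + ε) ^ (-α) * (br * wr ^ α)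
        + ((wP + ε) ^ (-α) - (wr + ε) ^ (-α)) * (ar * wr + br * wr ^ α) := hsplit
    _ ≤ ar * (wr + ε) ^ (1 - α) + (ε ^ (1 - α) * |ar| + br)
        + ((L * η * M) * |ar| + (L * η * (M ^ α)) * br) := by linarith [B1, B2, B3]

set_option maxHeartbeats 2000000 in
/-- Gronwall-type inequality (Lemma 4.1 in Showalter / Lemma 2.2 of the paper):
if `w` is a nonnegative absolutely continuous function on `[t₀, t₀ + T]`
(with a.e. derivative `w'`) satisfying
`(1 - α) w'(t) ≤ a(t) w(t) + b(t) w(t)^α` a.e., with `a, b ∈ L¹`, `b ≥ 0` a.e.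
and `0 ≤ α < 1`, then
`w(t)^(1-α) ≤ w(t₀)^(1-α) exp(∫_{t₀}^t a) + ∫_{t₀}^t exp(∫_s^t a) b(s) ds`. -/
theorem gronwall_power_inequality
    (t₀ T : ℝ) (hT : 0 < T)
    (a b : ℝ → ℝ)
    (ha : IntegrableOn a (Icc t₀ (t₀ + T)))
    (hb : IntegrableOn b (Icc t₀ (t₀ + T)))
    (hb_nonneg : ∀ᵐ t ∂(volume.restrict (Icc t₀ (t₀ + T))), 0 ≤ b t)
    (α : ℝ) (hα0 : 0 ≤ α) (hα1 : α < 1)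
    (w w' : ℝ → ℝ)
    (hw_nonneg : ∀ t ∈ Icc t₀ (t₀ + T), 0 ≤ w t)
    (hw'_int : IntegrableOn w' (Icc t₀ (t₀ + T)))
    (hw_AC : ∀ t ∈ Icc t₀ (t₀ + T), w t = w t₀ + ∫ s in t₀..t, w' s)
    (hw_deriv : ∀ᵐ t ∂(volume.restrict (Icc t₀ (t₀ + T))), HasDerivAt w (w' t) t)
    (hineq : ∀ᵐ t ∂(volume.restrict (Icc t₀ (t₀ + T))),
      (1 - α) * w' t ≤ a t * w t + b t * w t ^ α) :
    ∀ t ∈ Icc t₀ (t₀ + T),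
      w t ^ (1 - α) ≤ w t₀ ^ (1 - α) * Real.exp (∫ τ in t₀..t, a τ) +
        ∫ s in t₀..t, Real.exp (∫ τ in s..t, a τ) * b s := by
  intro t₁ ht₁
  have ht₁0 : t₀ ≤ t₁ := ht₁.1
  have ht₁T : t₁ ≤ t₀ + T := ht₁.2
  have hβ : (0:ℝ) < 1 - α := by linarith
  have ht₀K : t₀ ∈ Icc t₀ (t₀ + T) := ⟨le_rfl, by linarith⟩
  have ht₀m : t₀ ∈ Icc t₀ t₁ := ⟨le_rfl, ht₁0⟩
  have ht₁m : t₁ ∈ Icc t₀ t₁ := ⟨ht₁0, le_rfl⟩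
  have hsub : Icc t₀ t₁ ⊆ Icc t₀ (t₀ + T) := Icc_subset_Icc le_rfl ht₁T
  -- interval integrability helper
  have hii : ∀ {f : ℝ → ℝ}, IntegrableOn f (Icc t₀ (t₀ + T)) →
      ∀ p ∈ Icc t₀ t₁, ∀ q ∈ Icc t₀ t₁, IntervalIntegrable f volume p q := by
    intro f hf p hp q hq
    apply (hf.mono_set ?_).intervalIntegrable
    rw [show Icc t₀ (t₀ + T) = uIcc t₀ (t₀ + T) from (uIcc_of_le (by linarith)).symm]
    exact uIcc_subset_uIcc (Icc_subset_uIcc (hsub hp)) (Icc_subset_uIcc (hsub hq))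
  -- linear combinations of |a| and b are integrable
  have hAbs : IntegrableOn (fun r => |a r|) (Icc t₀ (t₀ + T)) := ha.abs
  have hlin : ∀ c₁ c₂ : ℝ,
      IntegrableOn (fun r => c₁ * |a r| + c₂ * b r) (Icc t₀ (t₀ + T)) :=
    fun c₁ c₂ => (hAbs.const_mul c₁).add (hb.const_mul c₂)
  -- continuity of w
  have hw_cont : ContinuousOn w (Icc t₀ (t₀ + T)) := by
    apply ContinuousOn.congr ((continuousOn_const (c := w t₀)).add
      (intervalIntegral.continuousOn_primitive (μ := volume) hw'_int))
    intro t ht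
    rw [hw_AC t ht, intervalIntegral.integral_of_le ht.1]
    rfl
  -- the exponential weight
  set A : ℝ → ℝ := fun s => ∫ τ in t₀..s, a τ with hA
  have hA_cont : ContinuousOn A (Icc t₀ (t₀ + T)) := by
    apply ContinuousOn.congr (intervalIntegral.continuousOn_primitive (μ := volume) ha)
    intro t ht
    show (∫ τ in t₀..t, a τ) = ∫ τ in Ioc t₀ t, a τ
    rw [intervalIntegral.integral_of_le ht.1]
  have hA0 : A t₀ = 0 := intervalIntegral.integral_same
  have hgoalA : (∫ τ in t₀..t₁, a τ) = A t₁ := rfl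
  clear_value A
  set E : ℝ → ℝ := fun s => Real.exp (-A s) with hE
  have hE_cont : ContinuousOn E (Icc t₀ (t₀ + T)) :=
    Real.continuous_exp.comp_continuousOn hA_cont.neg
  have hE_pos : ∀ s, 0 < E s := fun s => Real.exp_pos _
  have hE1 : E t₀ = 1 := by simp [hE, hA0]
  clear_value E
  -- bounds
  obtain ⟨M, hMa⟩ := (isCompact_Icc : IsCompact (Icc t₀ (t₀ + T))).exists_bound_of_continuousOn hw_cont
  have hwM : ∀ r ∈ Icc t₀ (t₀ + T), w r ≤ M := fun r hr =>
    (le_abs_self _).trans (by simpa [Real.norm_eq_abs] using hMa r hr)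
  have hM0 : 0 ≤ M := le_trans (hw_nonneg t₀ ht₀K) (hwM t₀ ht₀K)
  obtain ⟨M₁, hM₁a⟩ := (isCompact_Icc : IsCompact (Icc t₀ (t₀ + T))).exists_bound_of_continuousOn hE_cont
  have hEM : ∀ r ∈ Icc t₀ (t₀ + T), E r ≤ M₁ := fun r hr =>
    (le_abs_self _).trans (by simpa [Real.norm_eq_abs] using hM₁a r hr)
  have hM₁0 : 0 ≤ M₁ := le_trans (hE_pos t₀).le (hEM t₀ ht₀K)
  -- integrability of E-weighted functions
  have hE_meas : AEStronglyMeasurable E (volume.restrict (Icc t₀ (t₀ + T))) :=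
    hE_cont.aestronglyMeasurable measurableSet_Icc
  have hE_bdd : ∀ᵐ r ∂(volume.restrict (Icc t₀ (t₀ + T))), ‖E r‖ ≤ M₁ := by
    filter_upwards [ae_restrict_mem measurableSet_Icc] with r hr
    rw [Real.norm_eq_abs, abs_of_pos (hE_pos r)]
    exact hEM r hr
  have hEb_int : IntegrableOn (fun r => E r * b r) (Icc t₀ (t₀ + T)) :=
    hb.bdd_mul hE_meas hE_bdd
  have hEa_int : IntegrableOn (fun r => E r * |a r|) (Icc t₀ (t₀ + T)) :=
    hAbs.bdd_mul hE_meas hE_bdd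
  -- the master a.e. statement
  have hae : ∀ᵐ r ∂(volume.restrict (Icc t₀ (t₀ + T))),
      (1 - α) * w' r ≤ a r * w r + b r * w r ^ α ∧ 0 ≤ b r ∧ r ∈ Icc t₀ (t₀ + T) := by
    filter_upwards [hineq, hb_nonneg, ae_restrict_mem measurableSet_Icc] with r h1 h2 h3
    exact ⟨h1, h2, h3⟩
  -- fixed quantities
  set Ib : ℝ := ∫ r in t₀..t₁, E r * b r with hIb
  set Ia : ℝ := ∫ r in t₀..t₁, E r * |a r| with hIa
  clear_value Ia Ib
  -- KEY estimate for each ε > 0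
  have key : ∀ ε : ℝ, 0 < ε →
      w t₁ ^ (1 - α) ≤ (w t₀ + ε) ^ (1 - α) * Real.exp (A t₁) +
        Real.exp (A t₁) * Ib + ε ^ (1 - α) * (Real.exp (A t₁) * Ia) := by
    intro ε hε
    set L : ℝ := α * ε ^ (-α - 1) with hL
    have hL0 : 0 ≤ L := mul_nonneg hα0 (Real.rpow_nonneg hε.le _)
    clear_value L
    set v : ℝ → ℝ := fun r => (w r + ε) ^ (1 - α) with hv
    have hwε : ∀ r ∈ Icc t₀ (t₀ + T), 0 < w r + ε := fun r hr => by
      linarith only [hw_nonneg r hr, hε]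
    have hv_cont : ContinuousOn v (Icc t₀ (t₀ + T)) :=
      (hw_cont.add continuousOn_const).rpow_const
        (fun r hr => Or.inl (ne_of_gt (hwε r hr)))
    have hv_nonnegK : ∀ r ∈ Icc t₀ (t₀ + T), 0 ≤ v r := fun r hr =>
      Real.rpow_nonneg (hwε r hr).le _
    have hvM : ∀ r ∈ Icc t₀ (t₀ + T), v r ≤ (M + ε) ^ (1 - α) := fun r hr =>
      Real.rpow_le_rpow (hwε r hr).le (by linarith only [hwM r hr]) hβ.le
    clear_value v
    -- integrability of a * v
    have hv_meas : AEStronglyMeasurable v (volume.restrict (Icc t₀ (t₀ + T))) :=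
      hv_cont.aestronglyMeasurable measurableSet_Icc
    have hv_bdd : ∀ᵐ r ∂(volume.restrict (Icc t₀ (t₀ + T))), ‖v r‖ ≤ (M + ε) ^ (1 - α) := by
      filter_upwards [ae_restrict_mem measurableSet_Icc] with r hr
      rw [Real.norm_eq_abs, abs_of_nonneg (hv_nonnegK r hr)]
      exact hvM r hr
    have hav_int : IntegrableOn (fun r => a r * v r) (Icc t₀ (t₀ + T)) := by
      apply (ha.bdd_mul hv_meas hv_bdd).congr
      filter_upwards with r
      exact mul_comm (v r) (a r)
    set c : ℝ → ℝ := fun r => ε ^ (1 - α) * |a r| + b r with hc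
    have hc_int : IntegrableOn c (Icc t₀ (t₀ + T)) := (hAbs.const_mul _).add hb
    clear_value c
    have hEc_int : IntegrableOn (fun r => E r * c r) (Icc t₀ (t₀ + T)) :=
      hc_int.bdd_mul hE_meas hE_bdd
    set g : ℝ → ℝ := fun s => E s * v s - ∫ r in t₀..s, E r * c r with hg
    clear_value g
    -- main claim: g t₁ ≤ g t₀
    have hgmain : g t₁ ≤ g t₀ := by
      have hforall : ∀ η' : ℝ, 0 < η' → g t₁ ≤ g t₀ + η' := by
        intro η' hη'
        set Φ : ℝ → ℝ := fun r =>
          (M₁ + M₁ * L * M + ε ^ (1 - α)) * |a r| + (M₁ * L * (M ^ α) + 1) * b r with hΦ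
        have hΦ_int : IntegrableOn Φ (Icc t₀ (t₀ + T)) := hlin _ _
        clear_value Φ
        set C : ℝ := ∫ r in t₀..t₁, Φ r with hC
        have hC0 : 0 ≤ C := by
          rw [hC]
          apply intervalIntegral.integral_nonneg_of_ae_restrict ht₁0
          filter_upwards [ae_restrict_of_ae_restrict_of_subset hsub hae] with r hr
          simp only [Pi.zero_apply, hΦ]
          have hεβ : (0:ℝ) ≤ ε ^ (1 - α) := Real.rpow_nonneg hε.le _
          have hMα : (0:ℝ) ≤ M ^ α := Real.rpow_nonneg hM0 _
          have := hr.2.1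
          have habs : (0:ℝ) ≤ |a r| := abs_nonneg _
          have h1 : 0 ≤ (M₁ + M₁ * L * M + ε ^ (1 - α)) * |a r| :=
            mul_nonneg (add_nonneg (add_nonneg hM₁0
              (mul_nonneg (mul_nonneg hM₁0 hL0) hM0)) hεβ) habs
          have h2 : 0 ≤ (M₁ * L * (M ^ α) + 1) * b r :=
            mul_nonneg (add_nonneg (mul_nonneg (mul_nonneg hM₁0 hL0) hMα) zero_le_one) this
          linarith only [h1, h2]
        clear_value C
        set η : ℝ := η' / (C + 1) with hηdef
        have hη : 0 < η := div_pos hη' (by linarith only [hC0])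
        clear_value η
        -- uniform continuity moduli
        have hucw := Metric.uniformContinuousOn_iff_le.mp
          ((isCompact_Icc : IsCompact (Icc t₀ (t₀ + T))).uniformContinuousOn_of_continuous hw_cont)
        obtain ⟨δ₁, hδ₁, hmodw⟩ := hucw η hη
        have hucv := Metric.uniformContinuousOn_iff_le.mp
          ((isCompact_Icc : IsCompact (Icc t₀ (t₀ + T))).uniformContinuousOn_of_continuous hv_cont)
        obtain ⟨δ₂, hδ₂, hmodv⟩ := hucv η hη
        have hucE := Metric.uniformContinuousOn_iff_le.mp
          ((isCompact_Icc : IsCompact (Icc t₀ (t₀ + T))).uniformContinuousOn_of_continuous hE_cont)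
        obtain ⟨δ₃, hδ₃, hmodE⟩ := hucE η hη
        set δ : ℝ := min δ₁ (min δ₂ δ₃) with hδdef
        have hδ : 0 < δ := lt_min hδ₁ (lt_min hδ₂ hδ₃)
        have hδle1 : δ ≤ δ₁ := min_le_left _ _
        have hδle2 : δ ≤ δ₂ := (min_le_right _ _).trans (min_le_left _ _)
        have hδle3 : δ ≤ δ₃ := (min_le_right _ _).trans (min_le_right _ _)
        clear_value δ
        -- the partition
        obtain ⟨n, hn⟩ := exists_nat_gt (max ((t₁ - t₀) / δ) 0)
        have hn0 : (0:ℝ) < n := lt_of_le_of_lt (le_max_right _ _) hn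
        have hn0' : (n:ℝ) ≠ 0 := ne_of_gt hn0
        set Δ : ℝ := (t₁ - t₀) / n with hΔ
        have hΔ0 : 0 ≤ Δ := div_nonneg (by linarith only [ht₁0]) hn0.le
        have hΔδ : Δ ≤ δ := by
          have h1 : (t₁ - t₀) / δ < n := lt_of_le_of_lt (le_max_left _ _) hn
          rw [div_lt_iff₀ hδ] at h1
          rw [hΔ, div_le_iff₀ hn0]
          have h2 : (n:ℝ) * δ = δ * n := mul_comm _ _
          linarith only [h1, h2]
        clear_value Δ
        set p : ℕ → ℝ := fun i => t₀ + i * Δ with hp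
        have hp0 : p 0 = t₀ := by simp [hp]
        have hnΔ : (n:ℝ) * Δ = t₁ - t₀ := by
          rw [hΔ, mul_div_cancel₀ _ hn0']
        have hpn : p n = t₁ := by
          simp only [hp]
          linarith only [hnΔ]
        have hp_mem : ∀ i : ℕ, i ≤ n → p i ∈ Icc t₀ t₁ := by
          intro i hi
          have h1 : (0:ℝ) ≤ i * Δ := mul_nonneg (Nat.cast_nonneg i) hΔ0
          have h2 : (i:ℝ) * Δ ≤ n * Δ :=
            mul_le_mul_of_nonneg_right (Nat.cast_le.mpr hi) hΔ0
          simp only [hp, Set.mem_Icc]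
          constructor
          · linarith only [h1]
          · linarith only [h2, hnΔ]
        have hpsucc : ∀ i : ℕ, p (i + 1) - p i = Δ := by
          intro i
          simp only [hp, Nat.cast_succ]
          ring
        clear_value p
        -- per-interval estimate
        have step : ∀ i : ℕ, i < n →
            g (p (i + 1)) - g (p i) ≤ ∫ r in p i..p (i + 1), η * Φ r := by
          intro i hi
          set P : ℝ := p i with hP
          set Q : ℝ := p (i + 1) with hQ
          have hPm : P ∈ Icc t₀ t₁ := hp_mem i hi.le
          have hQm : Q ∈ Icc t₀ t₁ := hp_mem (i + 1) hi
          have hPK : P ∈ Icc t₀ (t₀ + T) := hsub hPm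
          have hQK : Q ∈ Icc t₀ (t₀ + T) := hsub hQm
          have hPQd : Q - P = Δ := hpsucc i
          clear_value P Q
          have hPQ : P ≤ Q := by linarith only [hPQd, hΔ0]
          have hPQsub : Icc P Q ⊆ Icc t₀ (t₀ + T) :=
            (Icc_subset_Icc hPm.1 hQm.2).trans hsub
          have hPQsub' : Icc P Q ⊆ Icc t₀ t₁ := Icc_subset_Icc hPm.1 hQm.2
          have hiiPQ : ∀ {f : ℝ → ℝ}, IntegrableOn f (Icc t₀ (t₀ + T)) →
              IntervalIntegrable f volume P Q := fun hf => hii hf P hPm Q hQm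
          -- a.e. facts on [P,Q]
          have haePQ : ∀ᵐ r ∂(volume.restrict (Icc P Q)),
              ((1 - α) * w' r ≤ a r * w r + b r * w r ^ α ∧ 0 ≤ b r ∧
                r ∈ Icc t₀ (t₀ + T)) ∧ r ∈ Icc P Q := by
            filter_upwards [ae_restrict_of_ae_restrict_of_subset hPQsub hae,
              ae_restrict_mem measurableSet_Icc] with r h1 h2
            exact ⟨h1, h2⟩
          -- (1) difference of w as an integral
          have hwd : w Q - w P = ∫ r in P..Q, w' r := by
            rw [hw_AC Q hQK, hw_AC P hPK]
            have h := intervalIntegral.integral_interval_sub_left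
              (hii hw'_int t₀ ht₀m Q hQm) (hii hw'_int t₀ ht₀m P hPm)
            linear_combination h
          -- (2) tangent inequality
          set Kp : ℝ := (1 - α) * (w P + ε) ^ (-α) with hKp
          clear_value Kp
          have htan : v Q - v P ≤ Kp * (w Q - w P) := by
            have h := gronwall_rpow_tangent (β := 1 - α) hβ (by linarith only [hα0])
              (hwε P hPK) (hwε Q hQK)
            rw [show (1:ℝ) - α - 1 = -α by ring] at h
            rw [show w Q + ε - (w P + ε) = w Q - w P by ring] at h
            simp only [hv, hKp]
            exact h
          -- (3) integral bound for the tangent term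
          set ψ : ℝ → ℝ := fun r => a r * v r + (ε ^ (1 - α) * |a r| + b r)
            + ((L * η * M) * |a r| + (L * η * (M ^ α)) * b r) with hψ
          have hψ_int : IntegrableOn ψ (Icc t₀ (t₀ + T)) :=
            (hav_int.add ((hAbs.const_mul _).add hb)).add (hlin _ _)
          clear_value ψ
          have h5 : v Q - v P ≤ ∫ r in P..Q, ψ r := by
            have heq : Kp * (w Q - w P) = ∫ r in P..Q, Kp * w' r := by
              rw [hwd, ← intervalIntegral.integral_const_mul]
            have hmono : (∫ r in P..Q, Kp * w' r) ≤ ∫ r in P..Q, ψ r := by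
              apply intervalIntegral.integral_mono_ae_restrict hPQ
                ((hiiPQ hw'_int).const_mul Kp) (hiiPQ hψ_int)
              filter_upwards [haePQ] with r ⟨⟨h1, h2, h3⟩, h4⟩
              have hmod : |w P - w r| ≤ η := by
                have hd : dist P r ≤ δ := by
                  rw [Real.dist_eq, abs_of_nonpos (by linarith only [h4.1] : P - r ≤ 0)]
                  linarith only [h4.2, hPQd, hΔδ]
                have := hmodw P hPK r h3 (hd.trans hδle1)
                rw [Real.dist_eq] at this
                exact this
              simp only [hψ, hv, hKp]
              exact gronwall_pointwise hα0 hα1 hε hL (hw_nonneg r h3) (hwM r h3)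
                (hw_nonneg P hPK) h2 h1 hmod hη.le
            linarith only [htan, heq, hmono]
          -- (4) exponential tangent bound
          have haQP : A Q - A P = ∫ r in P..Q, a r := by
            simp only [hA]
            exact intervalIntegral.integral_interval_sub_left
              (hii ha t₀ ht₀m Q hQm) (hii ha t₀ ht₀m P hPm)
          have h6 : E Q - E P ≤ -(E Q * ∫ r in P..Q, a r) := by
            have h1 := Real.add_one_le_exp (A Q - A P)
            have h2 : Real.exp (A Q - A P) * Real.exp (-A Q) = Real.exp (-A P) := by
              rw [← Real.exp_add]; ring_nf
            have h3 := mul_le_mul_of_nonneg_right h1 (Real.exp_pos (-A Q)).le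
            rw [h2] at h3
            have h4 : E Q - E P ≤ -(E Q * (A Q - A P)) := by
              simp only [hE]
              linarith only [h3]
            rwa [haQP] at h4
          -- (5) assemble: g Q - g P
          have hvP0 : 0 ≤ v P := hv_nonnegK P hPK
          have hEcPQ : (∫ r in t₀..Q, E r * c r) - (∫ r in t₀..P, E r * c r)
              = ∫ r in P..Q, E r * c r :=
            intervalIntegral.integral_interval_sub_left
              (hii hEc_int t₀ ht₀m Q hQm) (hii hEc_int t₀ ht₀m P hPm)
          have hgQP : g Q - g P = E Q * (v Q - v P) + (E Q - E P) * v P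
              - ∫ r in P..Q, E r * c r := by
            simp only [hg]
            rw [← hEcPQ]
            ring
          have h7 : E Q * (v Q - v P) ≤ E Q * ∫ r in P..Q, ψ r :=
            mul_le_mul_of_nonneg_left h5 (hE_pos Q).le
          have h8 : (E Q - E P) * v P ≤ -(E Q * ∫ r in P..Q, a r) * v P :=
            mul_le_mul_of_nonneg_right h6 hvP0
          -- split ψ
          set θ : ℝ → ℝ := fun r => a r * (v r - v P)
            + ((L * η * M) * |a r| + (L * η * (M ^ α)) * b r) with hθ
          have hθ_int : IntegrableOn θ (Icc t₀ (t₀ + T)) :=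
            ((hav_int.sub (ha.mul_const (v P))).congr
              (Filter.Eventually.of_forall fun r => by
                simp only [Pi.sub_apply]; ring)).add (hlin _ _)
          clear_value θ
          have hsplit2 : (∫ r in P..Q, ψ r) - (∫ r in P..Q, a r) * v P
              = (∫ r in P..Q, θ r) + ∫ r in P..Q, c r := by
            rw [← intervalIntegral.integral_mul_const,
              ← intervalIntegral.integral_sub (hiiPQ hψ_int)
                ((hiiPQ ha).mul_const (v P)),
              ← intervalIntegral.integral_add (hiiPQ hθ_int) (hiiPQ hc_int)]
            apply intervalIntegral.integral_congr
            intro r _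
            simp only [hψ, hθ, hc]
            ring
          -- bound θ integral
          set μ₁ : ℝ → ℝ := fun r => (η + L * η * M) * |a r| + (L * η * (M ^ α)) * b r
            with hμ₁
          have hμ₁_int : IntegrableOn μ₁ (Icc t₀ (t₀ + T)) := hlin _ _
          clear_value μ₁
          have hθμ : (∫ r in P..Q, θ r) ≤ ∫ r in P..Q, μ₁ r := by
            apply intervalIntegral.integral_mono_ae_restrict hPQ
              (hiiPQ hθ_int) (hiiPQ hμ₁_int)
            filter_upwards [haePQ] with r ⟨⟨h1, h2, h3⟩, h4⟩
            have hmodvr : |v r - v P| ≤ η := by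
              have hd : dist r P ≤ δ := by
                rw [Real.dist_eq, abs_of_nonneg (by linarith only [h4.1] : 0 ≤ r - P)]
                linarith only [h4.2, hPQd, hΔδ]
              have hd2 : dist r P ≤ δ₂ := hd.trans hδle2
              have := hmodv r h3 P hPK hd2
              rw [Real.dist_eq] at this
              exact this
            have h5' : a r * (v r - v P) ≤ η * |a r| := by
              calc a r * (v r - v P) ≤ |a r * (v r - v P)| := le_abs_self _
                _ = |a r| * |v r - v P| := abs_mul _ _
                _ ≤ |a r| * η := mul_le_mul_of_nonneg_left hmodvr (abs_nonneg _)
                _ = η * |a r| := mul_comm _ _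
            simp only [hθ, hμ₁]
            linarith only [h5']
          have hμ₁0 : 0 ≤ ∫ r in P..Q, μ₁ r := by
            apply intervalIntegral.integral_nonneg_of_ae_restrict hPQ
            filter_upwards [haePQ] with r ⟨⟨h1, h2, h3⟩, h4⟩
            have habs : (0:ℝ) ≤ |a r| := abs_nonneg _
            have hMα : (0:ℝ) ≤ M ^ α := Real.rpow_nonneg hM0 _
            simp only [Pi.zero_apply, hμ₁]
            have hx1 : 0 ≤ (η + L * η * M) * |a r| :=
              mul_nonneg (add_nonneg hη.le (mul_nonneg (mul_nonneg hL0 hη.le) hM0)) habs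
            have hx2 : 0 ≤ (L * η * (M ^ α)) * b r :=
              mul_nonneg (mul_nonneg (mul_nonneg hL0 hη.le) hMα) h2
            linarith only [hx1, hx2]
          have h9 : E Q * ∫ r in P..Q, θ r ≤ M₁ * ∫ r in P..Q, μ₁ r :=
            calc E Q * ∫ r in P..Q, θ r ≤ E Q * ∫ r in P..Q, μ₁ r :=
                mul_le_mul_of_nonneg_left hθμ (hE_pos Q).le
              _ ≤ M₁ * ∫ r in P..Q, μ₁ r :=
                mul_le_mul_of_nonneg_right (hEM Q hQK) hμ₁0
          -- bound the c-difference term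
          have hEQc_int : IntegrableOn (fun r => (E Q - E r) * c r) (Icc t₀ (t₀ + T)) := by
            apply hc_int.bdd_mul ((continuousOn_const.sub hE_cont).aestronglyMeasurable
              measurableSet_Icc) (c := |E Q| + M₁)
            filter_upwards [ae_restrict_mem measurableSet_Icc] with r hr
            rw [Real.norm_eq_abs]
            calc |E Q - E r| ≤ |E Q| + |E r| := abs_sub _ _
              _ ≤ |E Q| + M₁ := by
                  rw [abs_of_nonneg (hE_pos r).le]
                  linarith only [hEM r hr]
          have h10 : E Q * (∫ r in P..Q, c r) - (∫ r in P..Q, E r * c r)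
              ≤ ∫ r in P..Q, η * c r := by
            rw [← intervalIntegral.integral_const_mul,
              ← intervalIntegral.integral_sub ((hiiPQ hc_int).const_mul (E Q))
                (hiiPQ hEc_int)]
            apply intervalIntegral.integral_mono_ae_restrict hPQ
              (by
                apply IntervalIntegrable.sub ((hiiPQ hc_int).const_mul (E Q))
                  (hiiPQ hEc_int))
              ((hiiPQ hc_int).const_mul η)
            filter_upwards [haePQ] with r ⟨⟨h1, h2, h3⟩, h4⟩
            have hmodEr : |E Q - E r| ≤ η := by
              have hd : dist Q r ≤ δ := by
                rw [Real.dist_eq, abs_of_nonneg (by linarith only [h4.2] : 0 ≤ Q - r)]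
                linarith only [h4.1, hPQd, hΔδ]
              have hd3 : dist Q r ≤ δ₃ := hd.trans hδle3
              have := hmodE Q hQK r h3 hd3
              rw [Real.dist_eq] at this
              exact this
            have hcr : 0 ≤ c r := by
              simp only [hc]
              exact add_nonneg (mul_nonneg (Real.rpow_nonneg hε.le _) (abs_nonneg _)) h2
            calc E Q * c r - E r * c r = (E Q - E r) * c r := by ring
              _ ≤ η * c r := mul_le_mul_of_nonneg_right
                  ((le_abs_self _).trans hmodEr) hcr
          -- combine everything
          have hfinal : g Q - g P ≤ M₁ * (∫ r in P..Q, μ₁ r) + ∫ r in P..Q, η * c r := by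
            have e2 : E Q * (∫ r in P..Q, ψ r) + -(E Q * ∫ r in P..Q, a r) * v P
                = E Q * ((∫ r in P..Q, ψ r) - (∫ r in P..Q, a r) * v P) := by ring
            have e3 : E Q * ((∫ r in P..Q, θ r) + ∫ r in P..Q, c r)
                - (∫ r in P..Q, E r * c r)
                = E Q * (∫ r in P..Q, θ r)
                  + (E Q * (∫ r in P..Q, c r) - ∫ r in P..Q, E r * c r) := by ring
            calc g Q - g P ≤ E Q * (∫ r in P..Q, ψ r) + -(E Q * ∫ r in P..Q, a r) * v P
                  - ∫ r in P..Q, E r * c r := by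
                    rw [hgQP]
                    linarith only [h7, h8]
              _ = E Q * ((∫ r in P..Q, θ r) + ∫ r in P..Q, c r)
                  - ∫ r in P..Q, E r * c r := by rw [e2, hsplit2]
              _ = E Q * (∫ r in P..Q, θ r)
                  + (E Q * (∫ r in P..Q, c r) - ∫ r in P..Q, E r * c r) := e3
              _ ≤ M₁ * (∫ r in P..Q, μ₁ r) + ∫ r in P..Q, η * c r := by
                  linarith only [h9, h10]
          calc g Q - g P ≤ M₁ * (∫ r in P..Q, μ₁ r) + ∫ r in P..Q, η * c r := hfinal
            _ = ∫ r in P..Q, η * Φ r := by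
                rw [← intervalIntegral.integral_const_mul,
                  ← intervalIntegral.integral_add ((hiiPQ hμ₁_int).const_mul M₁)
                    ((hiiPQ hc_int).const_mul η)]
                apply intervalIntegral.integral_congr
                intro r _
                simp only [hμ₁, hc, hΦ]
                ring
        -- telescoping
        have htel : g t₁ - g t₀ = ∑ i ∈ Finset.range n, (g (p (i + 1)) - g (p i)) := by
          rw [Finset.sum_range_sub (fun i => g (p i)) n, hp0, hpn]
        have hsum : ∑ i ∈ Finset.range n, (g (p (i + 1)) - g (p i))
            ≤ ∑ i ∈ Finset.range n, ∫ r in p i..p (i + 1), η * Φ r :=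
          Finset.sum_le_sum (fun i hi => step i (Finset.mem_range.mp hi))
        have hadj : ∑ i ∈ Finset.range n, (∫ r in p i..p (i + 1), η * Φ r)
            = ∫ r in (p 0)..(p n), η * Φ r := by
          apply intervalIntegral.sum_integral_adjacent_intervals
          intro k hk
          exact ((hii hΦ_int (p k) (hp_mem k hk.le) (p (k+1))
            (hp_mem (k+1) hk)).const_mul η)
        have hηC : (∫ r in (p 0)..(p n), η * Φ r) = η * C := by
          rw [hp0, hpn, intervalIntegral.integral_const_mul, hC]
        have hηC' : η * C ≤ η' := by
          rw [hηdef]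
          rw [div_mul_eq_mul_div, div_le_iff₀ (by linarith only [hC0] : (0:ℝ) < C + 1)]
          exact mul_le_mul_of_nonneg_left (by linarith only []) hη'.le
        linarith only [htel, hsum, hadj, hηC, hηC']
      -- conclude g t₁ ≤ g t₀
      by_contra hcon
      push_neg at hcon
      have := hforall ((g t₁ - g t₀) / 2) (by linarith only [hcon])
      linarith only [this, hcon]
    -- unfold g and derive the key bound
    have hg0 : g t₀ = v t₀ := by
      simp only [hg]
      rw [intervalIntegral.integral_same]
      rw [hE1]
      ring
    have hkey1 : E t₁ * v t₁ ≤ v t₀ + ∫ r in t₀..t₁, E r * c r := by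
      have h := hgmain
      rw [hg0] at h
      simp only [hg] at h
      linarith only [h]
    have hEc_split : (∫ r in t₀..t₁, E r * c r) = ε ^ (1 - α) * Ia + Ib := by
      have h1 : (∫ r in t₀..t₁, E r * c r)
          = ∫ r in t₀..t₁, (ε ^ (1 - α) * (E r * |a r|) + E r * b r) := by
        apply intervalIntegral.integral_congr
        intro r _
        simp only [hc]
        ring
      rw [h1, intervalIntegral.integral_add
        ((hii hEa_int t₀ ht₀m t₁ ht₁m).const_mul _) (hii hEb_int t₀ ht₀m t₁ ht₁m),
        intervalIntegral.integral_const_mul, hIa, hIb]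
    have hET : Real.exp (A t₁) * E t₁ = 1 := by
      simp only [hE]
      rw [← Real.exp_add]
      simp
    have hkey2 : v t₁ ≤ Real.exp (A t₁) * (v t₀ + (ε ^ (1 - α) * Ia + Ib)) := by
      rw [← hEc_split]
      have h := mul_le_mul_of_nonneg_left hkey1 (Real.exp_pos (A t₁)).le
      calc v t₁ = Real.exp (A t₁) * E t₁ * v t₁ := by rw [hET]; ring
        _ = Real.exp (A t₁) * (E t₁ * v t₁) := by ring
        _ ≤ Real.exp (A t₁) * (v t₀ + ∫ r in t₀..t₁, E r * c r) := h
    have hwv : w t₁ ^ (1 - α) ≤ v t₁ := by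
      simp only [hv]
      exact Real.rpow_le_rpow (hw_nonneg t₁ (hsub ht₁m)) (by linarith only [hε]) hβ.le
    calc w t₁ ^ (1 - α) ≤ v t₁ := hwv
      _ ≤ Real.exp (A t₁) * (v t₀ + (ε ^ (1 - α) * Ia + Ib)) := hkey2
      _ = (w t₀ + ε) ^ (1 - α) * Real.exp (A t₁) + Real.exp (A t₁) * Ib
          + ε ^ (1 - α) * (Real.exp (A t₁) * Ia) := by
            simp only [hv]
            ring
  -- rewrite the goal using A, Ib
  have hgoalInt : (∫ s in t₀..t₁, Real.exp (∫ τ in s..t₁, a τ) * b s)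
      = Real.exp (A t₁) * Ib := by
    rw [hIb, ← intervalIntegral.integral_const_mul]
    apply intervalIntegral.integral_congr
    intro s hs
    have hs' : s ∈ Icc t₀ t₁ := by rwa [uIcc_of_le ht₁0] at hs
    have h1 : A t₁ - A s = ∫ τ in s..t₁, a τ := by
      simp only [hA]
      exact intervalIntegral.integral_interval_sub_left
        (hii ha t₀ ht₀m t₁ ht₁m) (hii ha t₀ ht₀m s hs')
    show Real.exp (∫ τ in s..t₁, a τ) * b s = Real.exp (A t₁) * (E s * b s)
    rw [← h1]
    simp only [hE]
    rw [show A t₁ - A s = A t₁ + (-A s) by ring, Real.exp_add]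
    ring
  rw [hgoalA, hgoalInt]
  -- limit as ε → 0⁺
  have hT0 : Filter.Tendsto (fun ε : ℝ => w t₀ + ε) (nhdsWithin 0 (Ioi 0)) (nhds (w t₀)) := by
    have h : Filter.Tendsto (fun ε : ℝ => w t₀ + ε) (nhds 0) (nhds (w t₀ + 0)) :=
      (continuous_const.add continuous_id).tendsto 0
    rw [add_zero] at h
    exact h.mono_left nhdsWithin_le_nhds
  have hT1 : Filter.Tendsto (fun ε : ℝ => (w t₀ + ε) ^ (1 - α)) (nhdsWithin 0 (Ioi 0))
      (nhds (w t₀ ^ (1 - α))) :=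
    ((Real.continuousAt_rpow_const (w t₀) (1 - α) (Or.inr hβ.le)).tendsto).comp hT0
  have hT2 : Filter.Tendsto (fun ε : ℝ => ε ^ (1 - α)) (nhdsWithin 0 (Ioi 0)) (nhds 0) := by
    have h := (Real.continuousAt_rpow_const 0 (1 - α) (Or.inr hβ.le)).tendsto
    rw [Real.zero_rpow (ne_of_gt hβ)] at h
    exact h.mono_left nhdsWithin_le_nhds
  have hTend : Filter.Tendsto (fun ε : ℝ => (w t₀ + ε) ^ (1 - α) * Real.exp (A t₁)
      + Real.exp (A t₁) * Ib + ε ^ (1 - α) * (Real.exp (A t₁) * Ia))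
      (nhdsWithin 0 (Ioi 0))
      (nhds (w t₀ ^ (1 - α) * Real.exp (A t₁) + Real.exp (A t₁) * Ib
        + 0 * (Real.exp (A t₁) * Ia))) :=
    ((hT1.mul_const _).add tendsto_const_nhds).add (hT2.mul_const _)
  have hEv : ∀ᶠ ε in nhdsWithin (0:ℝ) (Ioi 0),
      w t₁ ^ (1 - α) ≤ (w t₀ + ε) ^ (1 - α) * Real.exp (A t₁)
        + Real.exp (A t₁) * Ib + ε ^ (1 - α) * (Real.exp (A t₁) * Ia) := by
    apply Filter.eventually_of_mem self_mem_nhdsWithin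
    intro ε hε
    exact key ε hε
  have hle := ge_of_tendsto hTend hEv
  linarith only [hle]
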